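/- For every positive integer n, F_{np} = (F_n)^p · F_p, where p is the characteristic of F_q. -/

import Mathlib

open Polynomial

noncomputable def genFib {K : Type*} [Field K] (a b : K[X]) : ℕ → K[X]
  | 0 => 0
  | 1 => 1
  | n + 2 => a * genFib a b (n + 1) + b * genFib a b n

noncomputable def fibRank {K : Type*} [Field K] (a b M : K[X]) : ℕ :=
  sInf {n : ℕ | 0 < n ∧ M ∣ genFib a b n}

noncomputable def fibPeriod {K : Type*} [Field K] (a b M : K[X]) : ℕ :=
  sInf {n : ℕ | 0 < n ∧ M ∣ genFib a b n ∧ M ∣ (genFib a b (n + 1) - 1)}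

noncomputable def polyOrd {K : Type*} [Field K] (M g : K[X]) : ℕ :=
  orderOf (Ideal.Quotient.mk (Ideal.span {M}) g)

set_option maxHeartbeats 1000000 in
theorem stmt8 {K : Type*} [Field K] [Fintype K] (p : ℕ) [CharP K p]
    (a b : K[X]) (hb : b ≠ 0) (n : ℕ) (hn : 0 < n) :
    genFib a b (n * p) = genFib a b n ^ p * genFib a b p := by
  have hp : p.Prime := CharP.char_is_prime K p
  haveI : Fact p.Prime := ⟨hp⟩
  let Fq := FractionRing (Polynomial K)
  let L := AlgebraicClosure Fq
  let φ : Polynomial K →+* L := (algebraMap Fq L).comp (algebraMap (Polynomial K) Fq)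
  have hφ : Function.Injective φ :=
    (algebraMap Fq L).injective.comp (IsFractionRing.injective (Polynomial K) Fq)
  haveI : CharP L p := charP_of_injective_ringHom hφ p
  set A := φ a with hA
  set B := φ b with hBdef
  obtain ⟨t, ht⟩ : ∃ t : L, t ^ 2 = A * t + B := by
    obtain ⟨t, ht⟩ := IsAlgClosed.exists_root (C (1:L) * X ^ 2 + C (-A) * X + C (-B))
      (by rw [Polynomial.degree_quadratic one_ne_zero]; decide)
    refine ⟨t, ?_⟩
    have h := ht
    simp only [Polynomial.IsRoot, Polynomial.eval_add, Polynomial.eval_mul,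
      Polynomial.eval_pow, Polynomial.eval_C, Polynomial.eval_X] at h
    linear_combination h
  set s := A - t with hs
  have hts : t * s = -B := by rw [hs]; linear_combination -ht
  have hsum : A = t + s := by rw [hs]; ring
  have key : ∀ m, φ (genFib a b m) * (t - s) = t ^ m - s ^ m := by
    intro m
    induction m using Nat.twoStepInduction with
    | zero => simp [genFib]
    | one => simp [genFib]
    | more m ih1 ih2 =>
      have e2 : genFib a b (m + 2) = a * genFib a b (m + 1) + b * genFib a b m := rfl
      rw [e2, map_add, map_mul, map_mul, ← hA, ← hBdef, add_mul, mul_assoc, mul_assoc,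
        ih1, ih2, hsum]
      have hB' : B = -(t * s) := by rw [hts]; ring
      rw [hB']
      ring
  by_cases hd : t = s
  · -- double root: t = s, b ≠ 0 forces t ≠ 0, and F_k ↦ k t^(k-1)
    have htB : t * t = -B := by rw [← hts, ← hd]
    have ht0 : t ≠ 0 := by
      intro h0
      apply hb
      apply hφ
      rw [map_zero, ← hBdef, ← neg_eq_zero, ← htB, h0, mul_zero]
    have key2 : ∀ m, φ (genFib a b (m + 1)) = ((m : L) + 1) * t ^ m := by
      intro m
      induction m using Nat.twoStepInduction with
      | zero => simp [genFib]
      | one =>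
        have : genFib a b 2 = a * genFib a b 1 + b * genFib a b 0 := rfl
        rw [this]
        simp only [genFib, mul_one, mul_zero, add_zero, map_mul]
        rw [← hA, hsum, ← hd]
        push_cast
        ring
      | more m ih1 ih2 =>
        have e2 : genFib a b (m + 3) = a * genFib a b (m + 2) + b * genFib a b (m + 1) := rfl
        have hB2 : B = -(t * t) := by linear_combination htB
        rw [e2, map_add, map_mul, map_mul, ← hA, ← hBdef, ih1, ih2, hsum, ← hd, hB2]
        push_cast
        ring
    have hFp : genFib a b p = 0 := by
      apply hφ
      rw [map_zero]
      obtain ⟨m, hm⟩ : ∃ m, p = m + 1 := ⟨p - 1, (Nat.succ_pred_eq_of_pos hp.pos).symm⟩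
      rw [hm, key2]
      have : ((m : L) + 1) = ((p : ℕ) : L) := by rw [hm]; push_cast; ring
      rw [this, CharP.cast_eq_zero L p, zero_mul]
    have hFnp : genFib a b (n * p) = 0 := by
      apply hφ
      rw [map_zero]
      obtain ⟨m, hm⟩ : ∃ m, n * p = m + 1 :=
        ⟨n * p - 1, (Nat.succ_pred_eq_of_pos (Nat.mul_pos hn hp.pos)).symm⟩
      rw [hm, key2]
      have : ((m : L) + 1) = ((n * p : ℕ) : L) := by rw [hm]; push_cast; ring
      rw [this]
      have : ((n * p : ℕ) : L) = 0 := by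
        push_cast
        exact (CharP.cast_eq_zero_iff L p _).mpr (dvd_mul_left p n)
      rw [this, zero_mul]
    rw [hFp, hFnp, mul_zero]
  · -- distinct roots: Frobenius
    have hd' : t - s ≠ 0 := sub_ne_zero.mpr hd
    apply hφ
    have h1 := key (n * p)
    have h2 := key n
    have h3 := key p
    have frob : (t ^ n - s ^ n) ^ p = t ^ (n * p) - s ^ (n * p) := by
      rw [sub_pow_char, ← pow_mul, ← pow_mul]
    have main : φ (genFib a b (n * p)) * (t - s) =
        φ (genFib a b n ^ p * genFib a b p) * (t - s) := by
      rw [h1, ← frob, ← h2, map_mul, map_pow, mul_pow]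
      have hp1 : (t - s) ^ p = φ (genFib a b p) * (t - s) := by
        rw [h3, sub_pow_char]
      rw [hp1]
      ring
    exact mul_right_cancel₀ hd' main
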